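/- Let G be a cyclic group of even order n ≥ 4 such that n + 1 is composite, say n + 1 = ab with a, b ≥ 3, and let g be a generator of G. Then the zero-sum sequence A' = gⁿ(ag)ⁿ factors both as a product of 2 atoms and as a product of 3 atoms; explicitly, A' = (g·(ag)^{n−b})(g^{n−a}·(ag))(g^{a−1}·(ag)^{b−1}), so min L((−A')A') + 1 ∈ L((−A')A'). -/

import Mathlib

def IsMinZS {G : Type*} [AddCommGroup G] (U : Multiset G) : Prop :=
  U ≠ 0 ∧ U.sum = 0 ∧ ∀ V ≤ U, V ≠ 0 → V.sum = 0 → V = U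

noncomputable def DavC (G : Type*) [AddCommGroup G] : ℕ :=
  sSup {n | ∃ U : Multiset G, IsMinZS U ∧ U.card = n}

def LSet {G : Type*} [AddCommGroup G] (A : Multiset G) : Set ℕ :=
  {k | ∃ l : Multiset (Multiset G), l.card = k ∧ (∀ U ∈ l, IsMinZS U) ∧ l.sum = A}

noncomputable def rhoSet (L : Set ℕ) : ℚ := ((sSup L : ℕ) : ℚ) / ((sInf L : ℕ) : ℚ)

def IsIntervalSet (L : Set ℕ) : Prop := L.Nonempty ∧ L = Set.Icc (sInf L) (sSup L)

lemma cardSumAux {G : Type*} (l : Multiset (Multiset G)) :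
    Multiset.card l.sum = (l.map Multiset.card).sum := by
  induction l using Multiset.induction with
  | empty => simp
  | cons a s ih => simp [ih]

lemma minZS_replicate {G : Type*} [AddCommGroup G] {x : G} {m : ℕ} (hm : 0 < m)
    (hx : addOrderOf x = m) : IsMinZS (Multiset.replicate m x) := by
  refine ⟨?_, ?_, ?_⟩
  · intro hc
    have := congrArg Multiset.card hc
    simp at this; omega
  · rw [Multiset.sum_replicate, ← addOrderOf_dvd_iff_nsmul_eq_zero, hx]
  · intro V hV hne hsum
    obtain ⟨k, hk, rfl⟩ := Multiset.le_replicate_iff.1 hV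
    have hdvd : m ∣ k := by
      rw [← hx]
      exact addOrderOf_dvd_iff_nsmul_eq_zero.2 (by simpa using hsum)
    have hk0 : k ≠ 0 := by
      intro hc; subst hc; simp at hne
    have : k = m := le_antisymm hk (Nat.le_of_dvd (Nat.pos_of_ne_zero hk0) hdvd)
    rw [this]

lemma card_le_of_minZS {G : Type*} [AddCommGroup G] [Fintype G] {U : Multiset G}
    (hU : IsMinZS U) : Multiset.card U ≤ Fintype.card G := by
  by_contra hlt
  push_neg at hlt
  set L := U.toList with hLdef
  have hUL : (L : Multiset G) = U := Multiset.coe_toList U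
  have hlen : Fintype.card G < L.length := by
    rwa [← Multiset.coe_card, hUL]
  have key : ∀ i j : Fin L.length, i < j →
      (L.take (i+1)).sum = (L.take (j+1)).sum → False := by
    intro i j hij hsum
    have hijn : (i : ℕ) < (j : ℕ) := hij
    have hjn : (j : ℕ) < L.length := j.isLt
    set T := (L.take ((j:ℕ)+1)).drop ((i:ℕ)+1) with hT
    have h1 := List.take_append_drop ((i:ℕ)+1) (L.take ((j:ℕ)+1))
    rw [List.take_take, min_eq_left (by omega)] at h1
    have hTsum : T.sum = 0 := by
      have h2 := congrArg List.sum h1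
      rw [List.sum_append, ← hsum] at h2
      exact add_eq_left.1 h2
    have hTsub : T.Sublist L := (List.drop_sublist _ _).trans (List.take_sublist _ _)
    have hTle : (T : Multiset G) ≤ U := by rw [← hUL]; exact hTsub.subperm
    have hTlen : T.length = (j:ℕ) - (i:ℕ) := by
      rw [hT, List.length_drop, List.length_take]; omega
    have hTne : (T : Multiset G) ≠ 0 := by
      have : T ≠ [] := by
        intro hc; rw [hc] at hTlen; simp at hTlen; omega
      simpa [Multiset.coe_eq_zero] using this
    have heq := hU.2.2 _ hTle hTne hTsum
    have hcards : Multiset.card (T : Multiset G) = Multiset.card U := by rw [heq]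
    rw [Multiset.coe_card, ← hUL, Multiset.coe_card] at hcards
    omega
  have hninj : ¬ Function.Injective (fun i : Fin L.length => (L.take ((i:ℕ)+1)).sum) := by
    intro hinj
    have := Fintype.card_le_of_injective _ hinj
    simp at this; omega
  rw [Function.not_injective_iff] at hninj
  obtain ⟨i, j, hfij, hij⟩ := hninj
  rcases lt_or_gt_of_ne hij with hlt' | hlt'
  · exact key i j hlt' hfij
  · exact key j i hlt' hfij.symm

lemma minZS_mix {G : Type*} [AddCommGroup G] {n : ℕ} {g : G} (hg : addOrderOf g = n)
    (a p q : ℕ) (hgh : g ≠ a • g) (hpq : p + q ≠ 0) (hzero : n ∣ p + q * a)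
    (huniq : ∀ i j : ℕ, i ≤ p → j ≤ q → i + j ≠ 0 → n ∣ i + j * a → i = p ∧ j = q) :
    IsMinZS (Multiset.replicate p g + Multiset.replicate q (a • g)) := by
  classical
  have hsum2 : ∀ i j : ℕ, (Multiset.replicate i g + Multiset.replicate j (a • g)).sum
      = (i + j * a) • g := by
    intro i j
    rw [Multiset.sum_add, Multiset.sum_replicate, Multiset.sum_replicate,
      smul_smul, ← add_nsmul]
  have hzero_iff : ∀ k : ℕ, k • g = 0 ↔ n ∣ k := by
    intro k
    rw [← hg]
    exact addOrderOf_dvd_iff_nsmul_eq_zero.symm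
  refine ⟨?_, ?_, ?_⟩
  · intro hc
    apply hpq
    have := congrArg Multiset.card hc
    simpa using this
  · rw [hsum2, hzero_iff]; exact hzero
  · intro V hV hne hsum
    set i := V.count g with hi
    set j := V.count (a • g) with hj
    have hgh' : a • g ≠ g := Ne.symm hgh
    have hVeq : V = Multiset.replicate i g + Multiset.replicate j (a • g) := by
      ext x
      simp only [Multiset.count_add, Multiset.count_replicate]
      rcases eq_or_ne x g with rfl | hxg
      · simp [hgh', hi]
      · rcases eq_or_ne x (a • g) with rfl | hxh
        · simp [hgh, hj]
        · have hle := Multiset.count_le_of_le x hV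
          simp only [Multiset.count_add, Multiset.count_replicate,
            if_neg (Ne.symm hxg), if_neg (Ne.symm hxh)] at hle
          rw [if_neg (Ne.symm hxg), if_neg (Ne.symm hxh)]
          omega
    have hip : i ≤ p := by
      have := Multiset.count_le_of_le g hV
      simpa [Multiset.count_add, Multiset.count_replicate, hgh'] using this
    have hjq : j ≤ q := by
      have := Multiset.count_le_of_le (a • g) hV
      simpa [Multiset.count_add, Multiset.count_replicate, hgh] using this
    have hij0 : i + j ≠ 0 := by
      intro hc
      apply hne
      obtain ⟨h1, h2⟩ := Nat.add_eq_zero.1 hc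
      rw [hVeq, h1, h2]; simp
    have hdvd : n ∣ i + j * a := by
      rw [hVeq, hsum2] at hsum
      exact (hzero_iff _).1 hsum
    obtain ⟨hip', hjq'⟩ := huniq i j hip hjq hij0 hdvd
    rw [hVeq, hip', hjq']

theorem stmt17 {G : Type*} [AddCommGroup G] [Fintype G] (n a b : ℕ)
    (hn : 4 ≤ n) (heven : Even n) (hab : n + 1 = a * b) (ha : 3 ≤ a) (hb : 3 ≤ b)
    (hcyc : IsAddCyclic G) (hcard : Fintype.card G = n)
    (g : G) (hg : addOrderOf g = n) :
    ∀ (h : G) (A' W₁ W₂ W₃ B : Multiset G),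
      h = a • g →
      A' = Multiset.replicate n g + Multiset.replicate n h →
      W₁ = g ::ₘ Multiset.replicate (n - b) h →
      W₂ = Multiset.replicate (n - a) g + {h} →
      W₃ = Multiset.replicate (a - 1) g + Multiset.replicate (b - 1) h →
      B = A'.map (fun x => -x) + A' →
      IsMinZS W₁ ∧ IsMinZS W₂ ∧ IsMinZS W₃ ∧ W₁ + W₂ + W₃ = A' ∧
      (2 : ℕ) ∈ LSet A' ∧ (3 : ℕ) ∈ LSet A' ∧
      sInf (LSet B) = 4 ∧ sInf (LSet B) + 1 ∈ LSet B := by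
  intro h A' W₁ W₂ W₃ B hh hA hW1 hW2 hW3 hB
  subst hh
  have hn0 : 0 < n := by omega
  have h3a : a * 3 ≤ n + 1 := by rw [hab]; exact Nat.mul_le_mul (le_refl a) hb
  have h3b : 3 * b ≤ n + 1 := by rw [hab]; exact Nat.mul_le_mul ha (le_refl b)
  have han : a < n := by omega
  have hbn : b < n := by omega
  have hcop : Nat.Coprime n a := by
    have hda : Nat.gcd n a ∣ n + 1 := (Nat.gcd_dvd_right n a).trans ⟨b, hab⟩
    have h1 : Nat.gcd n a ∣ 1 := by
      have := Nat.dvd_sub hda (Nat.gcd_dvd_left n a)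
      simpa using this
    exact Nat.dvd_one.mp h1
  have hng : n • g = 0 := by rw [← hg]; exact addOrderOf_nsmul_eq_zero g
  have hordh : addOrderOf (a • g) = n := by
    apply Nat.dvd_antisymm
    · rw [addOrderOf_dvd_iff_nsmul_eq_zero, smul_comm, hng, smul_zero]
    · have hm : (addOrderOf (a • g)) • (a • g) = 0 := addOrderOf_nsmul_eq_zero _
      rw [smul_smul] at hm
      have h1 : n ∣ addOrderOf (a • g) * a := by
        rw [← hg]; exact addOrderOf_dvd_iff_nsmul_eq_zero.2 hm
      exact hcop.dvd_of_dvd_mul_right h1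
  have hgh : g ≠ a • g := by
    intro hc
    have h1 : (a - 1) • g + 1 • g = a • g := by rw [← add_nsmul]; congr 1; omega
    rw [one_nsmul, ← hc] at h1
    have h2 : (a - 1) • g + g = 0 + g := by rw [h1, zero_add]
    have h3 : (a - 1) • g = 0 := add_right_cancel h2
    have h4 : n ∣ a - 1 := by rw [← hg]; exact addOrderOf_dvd_iff_nsmul_eq_zero.2 h3
    have := Nat.le_of_dvd (by omega) h4
    omega
  have habz : (n : ℤ) + 1 = a * b := by exact_mod_cast hab
  have e1 : 1 + (n - b) * a = (a - 1) * n := by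
    zify [show b ≤ n by omega, show 1 ≤ a by omega]
    linear_combination habz
  have e2 : (n - a) + 1 * a = n := by omega
  have e3 : (a - 1) + (b - 1) * a = n := by
    zify [show 1 ≤ a by omega, show 1 ≤ b by omega]
    linear_combination -habz
  -- minimality of W₁
  have hcons : (g ::ₘ Multiset.replicate (n - b) (a • g))
      = Multiset.replicate 1 g + Multiset.replicate (n - b) (a • g) := by
    rw [Multiset.replicate_one, Multiset.singleton_add]
  have hW1min : IsMinZS W₁ := by
    rw [hW1, hcons]
    apply minZS_mix hg a 1 (n - b) hgh (by omega)
    · rw [e1]; exact dvd_mul_left n (a - 1)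
    · intro i j hi hj hij0 hdvd
      interval_cases i
      · exfalso
        have hj' : n ∣ j := hcop.dvd_of_dvd_mul_right (by simpa using hdvd)
        have := Nat.le_of_dvd (by omega) hj'
        omega
      · refine ⟨rfl, ?_⟩
        have m1 : 1 + j * a ≡ 0 [MOD n] := (Nat.modEq_zero_iff_dvd).2 hdvd
        have m2 : 1 + (n - b) * a ≡ 0 [MOD n] :=
          (Nat.modEq_zero_iff_dvd).2 (by rw [e1]; exact dvd_mul_left n (a - 1))
        have m3 : 1 + j * a ≡ 1 + (n - b) * a [MOD n] := m1.trans m2.symm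
        have m4 : j * a ≡ (n - b) * a [MOD n] := Nat.ModEq.add_left_cancel' 1 m3
        have m5 : j ≡ n - b [MOD n] := Nat.ModEq.cancel_right_of_coprime hcop m4
        exact m5.eq_of_lt_of_lt (by omega) (by omega)
  have hsingl : ({a • g} : Multiset G) = Multiset.replicate 1 (a • g) :=
    (Multiset.replicate_one _).symm
  have hW2min : IsMinZS W₂ := by
    rw [hW2, hsingl]
    apply minZS_mix hg a (n - a) 1 hgh (by omega)
    · rw [e2]
    · intro i j hi hj hij0 hdvd
      interval_cases j
      · exfalso
        have hdvd' : n ∣ i := by simpa using hdvd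
        have := Nat.le_of_dvd (by omega) hdvd'
        omega
      · have hge := Nat.le_of_dvd (by omega) hdvd
        exact ⟨by omega, rfl⟩
  have hW3min : IsMinZS W₃ := by
    rw [hW3]
    apply minZS_mix hg a (a - 1) (b - 1) hgh (by omega)
    · rw [e3]
    · intro i j hi hj hij0 hdvd
      have hja : j * a ≤ (b - 1) * a := Nat.mul_le_mul_right a hj
      have hpos : 0 < i + j * a := by
        rcases Nat.eq_zero_or_pos j with rfl | hj1
        · simp only [Nat.zero_mul, Nat.add_zero]
          omega
        · have h5 : a ≤ j * a := Nat.le_mul_of_pos_left a hj1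
          have : 0 < a := by omega
          exact Nat.lt_of_lt_of_le this (le_trans h5 (Nat.le_add_left _ _))
      have hge : n ≤ i + j * a := Nat.le_of_dvd hpos hdvd
      have hub : i + j * a ≤ (a - 1) + (b - 1) * a := Nat.add_le_add hi hja
      have heq : i + j * a = n := le_antisymm (by rw [← e3]; exact hub) hge
      have h1 : (a - 1) + (b - 1) * a ≤ (a - 1) + j * a := by
        rw [e3, ← heq]; exact Nat.add_le_add_right hi _
      have h2 : (b - 1) * a ≤ j * a := Nat.le_of_add_le_add_left h1
      have h3 : j * a = (b - 1) * a := Nat.le_antisymm hja h2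
      have hj' : j = b - 1 := Nat.eq_of_mul_eq_mul_right (by omega) h3
      have hi' : i = a - 1 := by
        rw [h3] at heq
        exact Nat.add_right_cancel (heq.trans e3.symm)
      exact ⟨hi', hj'⟩
  -- sum identity
  have key : ∀ (p₁ p₂ p₃ q₁ q₂ q₃ : ℕ) (x y : G),
      (Multiset.replicate p₁ x + Multiset.replicate q₁ y) +
        (Multiset.replicate p₂ x + Multiset.replicate q₂ y) +
        (Multiset.replicate p₃ x + Multiset.replicate q₃ y)
      = Multiset.replicate (p₁ + p₂ + p₃) x + Multiset.replicate (q₁ + q₂ + q₃) y := by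
    intros p₁ p₂ p₃ q₁ q₂ q₃ x y
    rw [Multiset.replicate_add, Multiset.replicate_add, Multiset.replicate_add,
      Multiset.replicate_add]
    abel
  have hsum123 : W₁ + W₂ + W₃ = A' := by
    rw [hW1, hW2, hW3, hA, hcons, hsingl, key,
      show 1 + (n - a) + (a - 1) = n by omega, show (n - b) + 1 + (b - 1) = n by omega]
  -- atoms of length n
  have hAtomG : IsMinZS (Multiset.replicate n g) := minZS_replicate hn0 hg
  have hAtomH : IsMinZS (Multiset.replicate n (a • g)) := minZS_replicate hn0 hordh
  have hAtomNG : IsMinZS (Multiset.replicate n (-g)) :=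
    minZS_replicate hn0 (by rw [addOrderOf_neg, hg])
  have hAtomNH : IsMinZS (Multiset.replicate n (-(a • g))) :=
    minZS_replicate hn0 (by rw [addOrderOf_neg, hordh])
  have h2A : (2 : ℕ) ∈ LSet A' := by
    refine ⟨{Multiset.replicate n g, Multiset.replicate n (a • g)}, by simp, ?_, ?_⟩
    · intro U hU
      simp only [Multiset.insert_eq_cons, Multiset.mem_cons, Multiset.mem_singleton] at hU
      rcases hU with rfl | rfl
      · exact hAtomG
      · exact hAtomH
    · simp [hA]
  have h3A : (3 : ℕ) ∈ LSet A' := by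
    refine ⟨{W₁, W₂, W₃}, by simp, ?_, ?_⟩
    · intro U hU
      simp only [Multiset.insert_eq_cons, Multiset.mem_cons, Multiset.mem_singleton] at hU
      rcases hU with rfl | rfl | rfl
      · exact hW1min
      · exact hW2min
      · exact hW3min
    · simp only [Multiset.insert_eq_cons, Multiset.sum_cons, Multiset.sum_singleton]
      rw [← hsum123]; abel
  have hBeq : B = (Multiset.replicate n (-g) + Multiset.replicate n (-(a • g))) +
      (Multiset.replicate n g + Multiset.replicate n (a • g)) := by
    rw [hB, hA]
    simp [Multiset.map_add, Multiset.map_replicate]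
  have h4B : (4 : ℕ) ∈ LSet B := by
    refine ⟨{Multiset.replicate n (-g), Multiset.replicate n (-(a • g)),
      Multiset.replicate n g, Multiset.replicate n (a • g)}, by simp, ?_, ?_⟩
    · intro U hU
      simp only [Multiset.insert_eq_cons, Multiset.mem_cons, Multiset.mem_singleton] at hU
      rcases hU with rfl | rfl | rfl | rfl
      · exact hAtomNG
      · exact hAtomNH
      · exact hAtomG
      · exact hAtomH
    · simp only [Multiset.insert_eq_cons, Multiset.sum_cons, Multiset.sum_singleton]
      rw [hBeq]; abel
  have h5B : (5 : ℕ) ∈ LSet B := by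
    refine ⟨{Multiset.replicate n (-g), Multiset.replicate n (-(a • g)), W₁, W₂, W₃},
      by simp, ?_, ?_⟩
    · intro U hU
      simp only [Multiset.insert_eq_cons, Multiset.mem_cons, Multiset.mem_singleton] at hU
      rcases hU with rfl | rfl | rfl | rfl | rfl
      · exact hAtomNG
      · exact hAtomNH
      · exact hW1min
      · exact hW2min
      · exact hW3min
    · simp only [Multiset.insert_eq_cons, Multiset.sum_cons, Multiset.sum_singleton]
      have hs : W₁ + (W₂ + W₃) = Multiset.replicate n g + Multiset.replicate n (a • g) := by
        rw [← add_assoc, hsum123, hA]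
      rw [hBeq, hs]; abel
  have hcardB : Multiset.card B = 4 * n := by
    rw [hB, hA]
    simp only [Multiset.card_add, Multiset.card_map, Multiset.card_replicate]
    omega
  have hlow : ∀ k ∈ LSet B, 4 ≤ k := by
    rintro k ⟨l, hl, hmins, hsuml⟩
    have h1 : (l.map Multiset.card).sum = 4 * n := by
      rw [← cardSumAux, hsuml, hcardB]
    have h2 : (l.map Multiset.card).sum ≤ Multiset.card (l.map Multiset.card) • n := by
      apply Multiset.sum_le_card_nsmul
      intro x hx
      obtain ⟨U, hU, rfl⟩ := Multiset.mem_map.1 hx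
      rw [← hcard]
      exact card_le_of_minZS (hmins U hU)
    rw [Multiset.card_map, hl, smul_eq_mul, h1] at h2
    exact Nat.le_of_mul_le_mul_right h2 hn0
  have hsinf : sInf (LSet B) = 4 := by
    have hmem := Nat.sInf_mem (⟨4, h4B⟩ : (LSet B).Nonempty)
    exact le_antisymm (Nat.sInf_le h4B) (hlow _ hmem)
  exact ⟨hW1min, hW2min, hW3min, hsum123, h2A, h3A, hsinf, by rw [hsinf]; exact h5B⟩
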